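/- For every finite simple graph G on n vertices and all positive integers d and m with m ≤ n, the d-improper chromatic number satisfies χ^d(G) ≥ 1 + (−dm + Σ_{i=1}^m λ_i)/(dm − Σ_{i=1}^m λ_{n+1−i}). -/

import Mathlib

open SimpleGraph Finset Matrix

namespace ImproperPaper

variable {V W : Type*}

/-- The strong product of two simple graphs. -/
def strongProd (G : SimpleGraph V) (H : SimpleGraph W) : SimpleGraph (V × W) where
  Adj p q := (p.1 = q.1 ∧ H.Adj p.2 q.2) ∨ (G.Adj p.1 q.1 ∧ p.2 = q.2) ∨
    (G.Adj p.1 q.1 ∧ H.Adj p.2 q.2)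
  symm := by
    refine ⟨?_⟩
    rintro ⟨a, b⟩ ⟨x, y⟩ (⟨h1, h2⟩ | ⟨h1, h2⟩ | ⟨h1, h2⟩)
    · exact Or.inl ⟨h1.symm, h2.symm⟩
    · exact Or.inr (Or.inl ⟨h1.symm, h2.symm⟩)
    · exact Or.inr (Or.inr ⟨h1.symm, h2.symm⟩)
  loopless := by
    refine ⟨?_⟩
    rintro ⟨a, b⟩ (⟨h1, h2⟩ | ⟨h1, h2⟩ | ⟨h1, h2⟩)
    · exact H.irrefl h2
    · exact G.irrefl h1
    · exact G.irrefl h1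

/-- The lexicographical product of two simple graphs. -/
def lexProd (G : SimpleGraph V) (H : SimpleGraph W) : SimpleGraph (V × W) where
  Adj p q := G.Adj p.1 q.1 ∨ (p.1 = q.1 ∧ H.Adj p.2 q.2)
  symm := by
    refine ⟨?_⟩
    rintro ⟨a, b⟩ ⟨x, y⟩ (h | ⟨h1, h2⟩)
    · exact Or.inl h.symm
    · exact Or.inr ⟨h1.symm, h2.symm⟩
  loopless := by
    refine ⟨?_⟩
    rintro ⟨a, b⟩ (h | ⟨h1, h2⟩)
    · exact G.irrefl h
    · exact H.irrefl h2

instance {G : SimpleGraph V} {H : SimpleGraph W} [DecidableEq V] [DecidableEq W]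
    [DecidableRel G.Adj] [DecidableRel H.Adj] : DecidableRel (strongProd G H).Adj := fun p q =>
  show Decidable ((p.1 = q.1 ∧ H.Adj p.2 q.2) ∨ (G.Adj p.1 q.1 ∧ p.2 = q.2) ∨
    (G.Adj p.1 q.1 ∧ H.Adj p.2 q.2)) from inferInstance

/-- A colouring is `d`-improper if every colour class induces a subgraph of
maximum degree at most `d`. -/
def IsImproperColoring (G : SimpleGraph V) (d : ℕ) {α : Type*} (c : V → α) : Prop :=
  ∀ v : V, ({w | G.Adj v w ∧ c w = c v} : Set V).ncard ≤ d

/-- The `d`-improper chromatic number. -/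
noncomputable def improperChromaticNumber (G : SimpleGraph V) (d : ℕ) : ℕ :=
  sInf {n | ∃ c : V → Fin n, IsImproperColoring G d c}

/-- A colouring is `t`-clustered if every monochromatic connected component has at
most `t` vertices. -/
def IsClusteredColoring (G : SimpleGraph V) (t : ℕ) {α : Type*} (c : V → α) : Prop :=
  ∀ v : V,
    ({w | Relation.ReflTransGen (fun a b => G.Adj a b ∧ c a = c b) v w} : Set V).ncard ≤ t

/-- The `t`-clustered chromatic number. -/
noncomputable def clusteredChromaticNumber (G : SimpleGraph V) (t : ℕ) : ℕ :=
  sInf {n | ∃ c : V → Fin n, IsClusteredColoring G t c}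

/-- The chromatic number: least `n` admitting a proper colouring with `n` colours. -/
noncomputable def chromNum (G : SimpleGraph V) : ℕ :=
  sInf {n | ∃ c : V → Fin n, ∀ u v, G.Adj u v → c u ≠ c v}

/-- The `b`-fold `d`-improper chromatic number: least number of colours in an assignment
of `b` colours to each vertex such that, for every colour `x`, the set of vertices whose
colour set contains `x` induces a subgraph of maximum degree at most `d`. -/
noncomputable def bFoldImproperChromaticNumber (G : SimpleGraph V) (b d : ℕ) : ℕ :=
  sInf {n | ∃ c : V → Finset (Fin n), (∀ v, (c v).card = b) ∧
    ∀ v : V, ∀ x ∈ c v, ({w | G.Adj v w ∧ x ∈ c w} : Set V).ncard ≤ d}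

/-- The (proper) `b`-fold chromatic number. -/
noncomputable def bFoldChromaticNumber (G : SimpleGraph V) (b : ℕ) : ℕ :=
  bFoldImproperChromaticNumber G b 0

/-- The `b`-fold `t`-clustered chromatic number. -/
noncomputable def bFoldClusteredChromaticNumber (G : SimpleGraph V) (b t : ℕ) : ℕ :=
  sInf {n | ∃ c : V → Finset (Fin n), (∀ v, (c v).card = b) ∧
    ∀ x : Fin n, ∀ v : V, x ∈ c v →
      ({w | Relation.ReflTransGen (fun a b' => G.Adj a b' ∧ x ∈ c a ∧ x ∈ c b') v w} :
        Set V).ncard ≤ t}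

/-- The fractional chromatic number `χ_f(G) = inf { χ_b(G)/b : b ≥ 1 }`. -/
noncomputable def fracChromaticNumber (G : SimpleGraph V) : ℝ :=
  sInf {x : ℝ | ∃ b : ℕ, 0 < b ∧ x = (bFoldChromaticNumber G b : ℝ) / b}

/-- The fractional `d`-improper chromatic number. -/
noncomputable def fracImproperChromaticNumber (G : SimpleGraph V) (d : ℕ) : ℝ :=
  sInf {x : ℝ | ∃ b : ℕ, 0 < b ∧ x = (bFoldImproperChromaticNumber G b d : ℝ) / b}

/-- The fractional `t`-clustered chromatic number. -/
noncomputable def fracClusteredChromaticNumber (G : SimpleGraph V) (t : ℕ) : ℝ :=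
  sInf {x : ℝ | ∃ b : ℕ, 0 < b ∧ x = (bFoldClusteredChromaticNumber G b t : ℝ) / b}

/-- `lam` lists the eigenvalues of the Hermitian matrix `A` (with multiplicity) in
non-increasing order. -/
def IsEigList {n : ℕ} {A : Matrix (Fin n) (Fin n) ℝ} (hA : A.IsHermitian)
    (lam : Fin n → ℝ) : Prop :=
  Antitone lam ∧ ∃ σ : Equiv.Perm (Fin n), lam = hA.eigenvalues ∘ σ

/-- The largest size of a vertex subset inducing a subgraph of maximum degree at most `d`. -/
noncomputable def maxImproperIndep (G : SimpleGraph V) (d : ℕ) : ℕ :=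
  sSup {k | ∃ s : Set V, s.ncard = k ∧ ∀ v ∈ s, ({w | w ∈ s ∧ G.Adj v w} : Set V).ncard ≤ d}

end ImproperPaper

namespace StmtAux

/-- threshold weight lemma, lower bound form -/
lemma sum_thresh_le {n : ℕ} (T : Finset (Fin n)) (μ w : Fin n → ℝ) (t : ℝ)
    (hT : ∀ j ∈ T, μ j ≤ t) (hTc : ∀ j ∉ T, t ≤ μ j)
    (hw0 : ∀ j, 0 ≤ w j) (hw1 : ∀ j, w j ≤ 1)
    (hsum : ∑ j, w j = T.card) :
    (∑ j ∈ T, μ j) ≤ ∑ j, μ j * w j := by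
  have hsplit : ∑ j ∈ univ \ T, μ j * w j + ∑ j ∈ T, μ j * w j = ∑ j, μ j * w j :=
    Finset.sum_sdiff (Finset.subset_univ T)
  have hwsplit : ∑ j ∈ univ \ T, w j + ∑ j ∈ T, w j = ∑ j, w j :=
    Finset.sum_sdiff (Finset.subset_univ T)
  have h1 : ∑ j ∈ T, (μ j - μ j * w j) ≤ ∑ j ∈ T, t * (1 - w j) := by
    apply Finset.sum_le_sum
    intro j hj
    have := hT j hj
    have := hw0 j
    have := hw1 j
    nlinarith
  have h2 : ∑ j ∈ univ \ T, t * w j ≤ ∑ j ∈ univ \ T, μ j * w j := by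
    apply Finset.sum_le_sum
    intro j hj
    have hj' : j ∉ T := (Finset.mem_sdiff.mp hj).2
    have := hTc j hj'
    have := hw0 j
    nlinarith
  have e1 : ∑ j ∈ T, (μ j - μ j * w j) = ∑ j ∈ T, μ j - ∑ j ∈ T, μ j * w j :=
    Finset.sum_sub_distrib _ _
  have e2 : ∑ j ∈ T, t * (1 - w j) = t * (T.card - ∑ j ∈ T, w j) := by
    rw [← Finset.mul_sum, Finset.sum_sub_distrib]
    simp [Finset.sum_const, mul_comm]
  have e3 : ∑ j ∈ univ \ T, t * w j = t * ∑ j ∈ univ \ T, w j := by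
    rw [Finset.mul_sum]
  have : t * ((T.card : ℝ) - ∑ j ∈ T, w j) = t * ∑ j ∈ univ \ T, w j := by
    have : (∑ j ∈ univ \ T, w j) = (T.card : ℝ) - ∑ j ∈ T, w j := by
      rw [← hsum] at *
      linarith [hwsplit]
    rw [this]
  linarith [h1, h2]

/-- diagonal entries of hermitian idempotent matrices have nonneg real part -/
lemma diag_nonneg {N : ℕ} (S : Matrix (Fin N) (Fin N) ℂ) (hS : Sᴴ = S)
    (hid : S * S = S) (j : Fin N) : 0 ≤ (S j j).re := by
  have hrow : S j j = ∑ v, S j v * (starRingEnd ℂ) (S j v) := by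
    conv_lhs => rw [← hid]
    rw [Matrix.mul_apply]
    congr 1
    ext v
    congr 1
    have : (Sᴴ) v j = S v j := by rw [hS]
    rw [← this, Matrix.conjTranspose_apply, RCLike.star_def]
  have : (S j j).re = ∑ v, Complex.normSq (S j v) := by
    rw [hrow]
    rw [Complex.re_sum]
    congr 1
    ext v
    rw [Complex.mul_conj]
    simp
  rw [this]
  exact Finset.sum_nonneg fun v _ => Complex.normSq_nonneg _


lemma quad_eq_weights {n m : ℕ} (W Ac : Matrix (Fin n) (Fin n) ℂ) (μ : Fin n → ℝ)
    (hW1 : Wᴴ * W = 1) (hW2 : W * Wᴴ = 1)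
    (hAc : Ac = W * Matrix.diagonal (fun j => (μ j : ℂ)) * Wᴴ)
    (x : Fin m → Fin n → ℂ)
    (hx : ∀ i i', star (x i) ⬝ᵥ x i' = if i = i' then 1 else 0) :
    ∃ w : Fin n → ℝ, (∀ j, 0 ≤ w j) ∧ (∀ j, w j ≤ 1) ∧ (∑ j, w j = m) ∧
      (∑ i, star (x i) ⬝ᵥ (Ac *ᵥ x i)) = ((∑ j, μ j * w j : ℝ) : ℂ) := by
  set y : Fin m → Fin n → ℂ := fun i => Wᴴ *ᵥ x i with hy
  have hstary : ∀ i, star (x i) ᵥ* W = star (y i) := by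
    intro i
    rw [hy]
    simp only
    rw [star_mulVec, conjTranspose_conjTranspose]
  -- orthonormality of y
  have hortho : ∀ i i', star (y i) ⬝ᵥ y i' = if i = i' then 1 else 0 := by
    intro i i'
    rw [← hx i i', hy]
    simp only
    rw [star_mulVec, conjTranspose_conjTranspose, dotProduct_mulVec, vecMul_vecMul,
      hW2, vecMul_one]
  -- quadratic form identity
  have hquad : ∀ i, star (x i) ⬝ᵥ (Ac *ᵥ x i)
      = ∑ j, (μ j : ℂ) * Complex.normSq (y i j) := by
    intro i
    have h1 : Ac *ᵥ x i = W *ᵥ (Matrix.diagonal (fun j => (μ j : ℂ)) *ᵥ y i) := by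
      rw [hAc, hy]
      simp only [← mulVec_mulVec]
    rw [h1, dotProduct_mulVec, hstary, dotProduct, ]
    congr 1
    ext j
    rw [mulVec_diagonal]
    rw [Pi.star_apply, RCLike.star_def]
    rw [show (starRingEnd ℂ) (y i j) * ((μ j : ℂ) * y i j)
        = (μ j : ℂ) * ((y i j) * (starRingEnd ℂ) (y i j)) by ring, Complex.mul_conj]
  -- norms of y are 1
  have hnorm : ∀ i, ∑ j, Complex.normSq (y i j) = 1 := by
    intro i
    have h := hortho i i
    rw [if_pos rfl] at h
    have h2 : star (y i) ⬝ᵥ y i = ((∑ j, Complex.normSq (y i j) : ℝ) : ℂ) := by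
      rw [dotProduct]
      push_cast
      congr 1
      ext j
      rw [Pi.star_apply, RCLike.star_def,
        show (starRingEnd ℂ) (y i j) * y i j = y i j * (starRingEnd ℂ) (y i j) by ring,
        Complex.mul_conj]
    rw [h2] at h
    exact_mod_cast h
  -- the weights
  refine ⟨fun j => ∑ i, Complex.normSq (y i j), fun j => Finset.sum_nonneg fun i _ =>
    Complex.normSq_nonneg _, ?_, ?_, ?_⟩
  · -- Bessel bound via projection matrix
    intro j
    set Q : Matrix (Fin m) (Fin n) ℂ := fun i v => star (y i v) with hQ
    have hQQ : Q * Qᴴ = 1 := by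
      ext i i'
      rw [Matrix.mul_apply, Matrix.one_apply]
      have : ∑ v, Q i v * Qᴴ v i' = star (y i) ⬝ᵥ y i' := by
        rw [dotProduct]
        congr 1
        ext v
        rw [hQ]
        simp only [conjTranspose_apply, Pi.star_apply]
        show _ * star (star (y i' v)) = _
        rw [star_star]
      rw [this, hortho i i']
    set R : Matrix (Fin n) (Fin n) ℂ := Qᴴ * Q with hR
    have hRherm : Rᴴ = R := by rw [hR, conjTranspose_mul, conjTranspose_conjTranspose]
    have hRid : R * R = R := by
      rw [hR, Matrix.mul_assoc, ← Matrix.mul_assoc Q, hQQ, Matrix.one_mul]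
    have hRjj : R j j = ((∑ i, Complex.normSq (y i j) : ℝ) : ℂ) := by
      rw [hR, Matrix.mul_apply]
      push_cast
      congr 1
      ext i
      simp only [conjTranspose_apply, hQ, Pi.star_apply, star_star]
      show star (star (y i j)) * star (y i j) = _
      rw [star_star, show y i j * star (y i j) = y i j * (starRingEnd ℂ) (y i j) from rfl,
        Complex.mul_conj]
    have hS : (1 - R)ᴴ = 1 - R := by
      rw [conjTranspose_sub, conjTranspose_one, hRherm]
    have hSid : (1 - R) * (1 - R) = 1 - R := by
      simp only [Matrix.sub_mul, Matrix.mul_sub, Matrix.one_mul, Matrix.mul_one, hRid]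
      abel
    have := diag_nonneg (1 - R) hS hSid j
    rw [Matrix.sub_apply, Matrix.one_apply_eq] at this
    have hre : (R j j).re = ∑ i, Complex.normSq (y i j) := by rw [hRjj]; simp
    simp only [Complex.sub_re, Complex.one_re] at this
    rw [hre] at this
    linarith
  · rw [Finset.sum_comm]
    simp_rw [hnorm]
    simp
  · rw [show (∑ i, star (x i) ⬝ᵥ (Ac *ᵥ x i)) = ∑ i, ∑ j, (μ j : ℂ) * Complex.normSq (y i j)
      from Finset.sum_congr rfl fun i _ => hquad i]
    rw [Finset.sum_comm]
    push_cast [Finset.mul_sum]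
    rfl

lemma quad_B_le {n : ℕ} (b : Matrix (Fin n) (Fin n) ℝ) (d : ℝ)
    (hsym : ∀ v w, b w v = b v w) (hnn : ∀ v w, 0 ≤ b v w)
    (hrow : ∀ v, ∑ w, b v w ≤ d) (x : Fin n → ℂ)
    (hx : ∑ v, Complex.normSq (x v) = 1) (hd : 0 ≤ d) :
    (star x ⬝ᵥ ((b.map (fun r => (r:ℂ))) *ᵥ x)).re ≤ d := by
  have hexp : (star x ⬝ᵥ ((b.map (fun r => (r:ℂ))) *ᵥ x)).re
      = ∑ v, ∑ w, b v w * ((starRingEnd ℂ) (x v) * x w).re := by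
    simp only [dotProduct, Matrix.mulVec, Pi.star_apply, RCLike.star_def,
      Matrix.map_apply, Finset.mul_sum, Complex.re_sum]
    congr 1
    ext v
    congr 1
    ext w
    rw [show (starRingEnd ℂ) (x v) * ((b v w : ℂ) * x w)
        = (b v w : ℂ) * ((starRingEnd ℂ) (x v) * x w) by ring]
    rw [Complex.re_ofReal_mul]
  rw [hexp]
  have hbound : ∀ v w, b v w * ((starRingEnd ℂ) (x v) * x w).re
      ≤ b v w * (Complex.normSq (x v) / 2) + b v w * (Complex.normSq (x w) / 2) := by
    intro v w
    have key : ((starRingEnd ℂ) (x v) * x w).re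
        ≤ Complex.normSq (x v) / 2 + Complex.normSq (x w) / 2 := by
      have h1 : ((starRingEnd ℂ) (x v) * x w).re ≤ ‖(starRingEnd ℂ) (x v) * x w‖ :=
        Complex.re_le_norm _
      have h2 : ‖(starRingEnd ℂ) (x v) * x w‖
          = ‖x v‖ * ‖x w‖ := by
        rw [norm_mul, Complex.norm_conj]
      have h3 : 2 * ‖x v‖ * ‖x w‖
          ≤ ‖x v‖ ^ 2 + ‖x w‖ ^ 2 := two_mul_le_add_sq _ _
      have h4 : ‖x v‖ ^ 2 = Complex.normSq (x v) := Complex.sq_norm _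
      have h5 : ‖x w‖ ^ 2 = Complex.normSq (x w) := Complex.sq_norm _
      nlinarith
    nlinarith [hnn v w, mul_le_mul_of_nonneg_left key (hnn v w)]
  have step : ∑ v, ∑ w, b v w * ((starRingEnd ℂ) (x v) * x w).re
      ≤ ∑ v, ∑ w, (b v w * (Complex.normSq (x v) / 2) + b v w * (Complex.normSq (x w) / 2)) :=
    Finset.sum_le_sum fun v _ => Finset.sum_le_sum fun w _ => hbound v w
  refine le_trans step ?_
  have hA : ∑ v, ∑ w, b v w * (Complex.normSq (x v) / 2) ≤ d / 2 := by
    have : ∀ v, ∑ w, b v w * (Complex.normSq (x v) / 2)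
        = (∑ w, b v w) * (Complex.normSq (x v) / 2) := fun v => (Finset.sum_mul ..).symm
    calc ∑ v, ∑ w, b v w * (Complex.normSq (x v) / 2)
        = ∑ v, (∑ w, b v w) * (Complex.normSq (x v) / 2) := Finset.sum_congr rfl fun v _ => this v
      _ ≤ ∑ v, d * (Complex.normSq (x v) / 2) := Finset.sum_le_sum fun v _ =>
          mul_le_mul_of_nonneg_right (hrow v) (by have := Complex.normSq_nonneg (x v); positivity)
      _ = d / 2 := by rw [← Finset.mul_sum, ← Finset.sum_div, hx]; ring
  have hB : ∑ v, ∑ w, b v w * (Complex.normSq (x w) / 2) ≤ d / 2 := by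
    rw [Finset.sum_comm]
    have : ∀ w, ∑ v, b v w * (Complex.normSq (x w) / 2)
        = (∑ v, b w v) * (Complex.normSq (x w) / 2) := by
      intro w
      rw [Finset.sum_mul]
      exact Finset.sum_congr rfl fun v _ => by rw [hsym v w]
    calc ∑ w, ∑ v, b v w * (Complex.normSq (x w) / 2)
        = ∑ w, (∑ v, b w v) * (Complex.normSq (x w) / 2) := Finset.sum_congr rfl fun w _ => this w
      _ ≤ ∑ w, d * (Complex.normSq (x w) / 2) := Finset.sum_le_sum fun w _ =>
          mul_le_mul_of_nonneg_right (hrow w) (by have := Complex.normSq_nonneg (x w); positivity)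
      _ = d / 2 := by rw [← Finset.mul_sum, ← Finset.sum_div, hx]; ring
  calc ∑ v, ∑ w, (b v w * (Complex.normSq (x v) / 2) + b v w * (Complex.normSq (x w) / 2))
      = ∑ v, ∑ w, b v w * (Complex.normSq (x v) / 2)
        + ∑ v, ∑ w, b v w * (Complex.normSq (x w) / 2) := by
        rw [← Finset.sum_add_distrib]
        exact Finset.sum_congr rfl fun v _ => Finset.sum_add_distrib
    _ ≤ d / 2 + d / 2 := add_le_add hA hB
    _ = d := by ring

lemma root_sum {k : ℕ} (hk : 0 < k) (a a' : Fin k) :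
    ∑ j : Fin k, (Complex.exp (2 * Real.pi * Complex.I / k)) ^ ((j:ℕ) * (a:ℕ)) *
      (starRingEnd ℂ) ((Complex.exp (2 * Real.pi * Complex.I / k)) ^ ((j:ℕ) * (a':ℕ))) =
      if a = a' then (k:ℂ) else 0 := by
  set ω : ℂ := Complex.exp (2 * Real.pi * Complex.I / k) with hω
  have hprim : IsPrimitiveRoot ω k := Complex.isPrimitiveRoot_exp k hk.ne'
  have hω0 : ω ≠ 0 := hprim.ne_zero hk.ne'
  have hconj : (starRingEnd ℂ) ω = ω⁻¹ := by
    rw [hω, ← Complex.exp_conj, ← Complex.exp_neg]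
    congr 1
    simp [map_div₀, Complex.conj_I, map_ofNat]
    ring
  set z : ℂ := ω ^ ((a : ℤ) - (a' : ℤ)) with hz
  have hterm : ∀ j : Fin k, ω ^ ((j:ℕ) * (a:ℕ)) * (starRingEnd ℂ) (ω ^ ((j:ℕ) * (a':ℕ)))
      = z ^ (j : ℕ) := by
    intro j
    rw [map_pow, hconj, inv_pow, ← zpow_natCast ω ((j:ℕ) * (a:ℕ)),
      ← zpow_natCast ω ((j:ℕ) * (a':ℕ)), ← zpow_neg ω _, ← zpow_add₀ hω0, hz,
      ← zpow_natCast (ω ^ ((a:ℤ) - (a':ℤ))) (j:ℕ), ← zpow_mul ω]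
    congr 1
    push_cast
    ring
  rw [Finset.sum_congr rfl fun j _ => hterm j]
  by_cases haa : a = a'
  · subst haa
    have : z = 1 := by rw [hz]; simp
    rw [this]
    simp
  · rw [if_neg haa]
    have hzk : z ^ k = 1 := by
      rw [hz, ← zpow_natCast (ω ^ ((a:ℤ) - (a':ℤ))) k, ← zpow_mul ω, mul_comm,
        zpow_mul ω, zpow_natCast, hprim.pow_eq_one]
      exact _root_.one_zpow _
    have hz1 : z ≠ 1 := by
      intro h
      rw [hz] at h
      have hdvd : (k : ℤ) ∣ ((a : ℤ) - (a' : ℤ)) := (hprim.zpow_eq_one_iff_dvd _).mp h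
      have : (a : ℤ) - (a' : ℤ) = 0 := by
        apply Int.eq_zero_of_abs_lt_dvd hdvd
        have h1 : (a : ℤ) < k := by exact_mod_cast a.isLt
        have h2 : (a' : ℤ) < k := by exact_mod_cast a'.isLt
        have h3 : 0 ≤ (a : ℤ) := by positivity
        have h4 : 0 ≤ (a' : ℤ) := by positivity
        rw [abs_lt]
        omega
      apply haa
      have : (a : ℤ) = (a' : ℤ) := by omega
      exact Fin.ext (by exact_mod_cast this)
    rw [Fin.sum_univ_eq_sum_range (fun j => z ^ j) k]
    rw [geom_sum_eq hz1, hzk]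
    simp

lemma dot_self_normSq {n : ℕ} (z : Fin n → ℂ) :
    star z ⬝ᵥ z = ((∑ v, Complex.normSq (z v) : ℝ) : ℂ) := by
  rw [dotProduct]
  push_cast
  congr 1
  ext v
  rw [Pi.star_apply, RCLike.star_def,
    show (starRingEnd ℂ) (z v) * z v = z v * (starRingEnd ℂ) (z v) by ring, Complex.mul_conj]

lemma card_filter_ge {n t : ℕ} (h : t ≤ n) :
    ((univ : Finset (Fin n)).filter fun i : Fin n => t ≤ (i:ℕ)).card = n - t := by
  rw [Finset.card_filter, Fin.sum_univ_eq_sum_range (fun i => if t ≤ i then 1 else 0) n,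
    ← Finset.card_filter]
  have : (Finset.range n).filter (fun i => t ≤ i) = Finset.Ico t n := by
    ext x
    simp only [Finset.mem_filter, Finset.mem_range, Finset.mem_Ico]
    omega
  rw [this, Nat.card_Ico]

lemma dotProduct_finsum {n k : ℕ} (v : Fin n → ℂ) (s : Finset (Fin k))
    (g : Fin k → Fin n → ℂ) : v ⬝ᵥ (∑ j ∈ s, g j) = ∑ j ∈ s, v ⬝ᵥ g j := by
  simp only [dotProduct, Finset.sum_apply, Finset.mul_sum]
  exact Finset.sum_comm

lemma sum_mulVec {n k : ℕ} (s : Finset (Fin k)) (M : Fin k → Matrix (Fin n) (Fin n) ℂ)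
    (v : Fin n → ℂ) : (∑ j ∈ s, M j) *ᵥ v = ∑ j ∈ s, (M j *ᵥ v) := by
  ext i
  rw [Finset.sum_apply]
  simp only [Matrix.mulVec, dotProduct, Matrix.sum_apply, Finset.sum_mul]
  exact Finset.sum_comm

end StmtAux

open StmtAux

open ImproperPaper in

theorem stmt_13 {n : ℕ} (G : SimpleGraph (Fin n)) [DecidableRel G.Adj] (d m : ℕ)
    (hd : 0 < d) (hm : 0 < m) (hmn : m ≤ n)
    (hA : (G.adjMatrix ℝ).IsHermitian) (lam : Fin n → ℝ) (hlam : IsEigList hA lam) :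
    1 + (-(d * m : ℝ) + ∑ i ∈ Finset.univ.filter (fun i : Fin n => (i : ℕ) < m), lam i) /
        ((d * m : ℝ) - ∑ i ∈ Finset.univ.filter (fun i : Fin n => n - m ≤ (i : ℕ)), lam i) ≤
      (improperChromaticNumber G d : ℝ) := by
  classical
  obtain ⟨hanti, σ, hσ⟩ := hlam
  have hn : 0 < n := lt_of_lt_of_le hm hmn
  set μ : Fin n → ℝ := hA.eigenvalues with hμ
  set Stop : ℝ := ∑ i ∈ Finset.univ.filter (fun i : Fin n => (i : ℕ) < m), lam i with hStop
  set Sbot : ℝ := ∑ i ∈ Finset.univ.filter (fun i : Fin n => n - m ≤ (i : ℕ)), lam i with hSbot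
  -- matrices over ℂ
  set A : Matrix (Fin n) (Fin n) ℝ := G.adjMatrix ℝ with hAdef
  set Vmat : Matrix (Fin n) (Fin n) ℝ := (hA.eigenvectorUnitary : Matrix (Fin n) (Fin n) ℝ)
    with hVmat
  have hV2 : Vmat * star Vmat = 1 := (Matrix.mem_unitaryGroup_iff).mp hA.eigenvectorUnitary.2
  have hV1 : star Vmat * Vmat = 1 := (Matrix.mem_unitaryGroup_iff').mp hA.eigenvectorUnitary.2
  have hspec : A = Vmat * Matrix.diagonal μ * star Vmat := by
    have := hA.spectral_theorem
    rw [RCLike.ofReal_real_eq_id] at this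
    simpa using this
  set f : ℝ →+* ℂ := Complex.ofRealHom with hf
  set Wc : Matrix (Fin n) (Fin n) ℂ := Vmat.map f with hWc
  have hstarmap : (star Vmat).map f = Wcᴴ := by
    rw [Matrix.star_eq_conjTranspose, hWc]
    exact Matrix.conjTranspose_map f fun a => by simp [hf]
  have hWc1 : Wcᴴ * Wc = 1 := by
    rw [← hstarmap, hWc, ← Matrix.map_mul, hV1, Matrix.map_one f (map_zero f) (map_one f)]
  have hWc2 : Wc * Wcᴴ = 1 := by
    rw [← hstarmap, hWc, ← Matrix.map_mul, hV2, Matrix.map_one f (map_zero f) (map_one f)]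
  set Ac : Matrix (Fin n) (Fin n) ℂ := A.map f with hAc
  set Dc : Matrix (Fin n) (Fin n) ℂ := Matrix.diagonal (fun j => (μ j : ℂ)) with hDc
  have hAcspec : Ac = Wc * Dc * Wcᴴ := by
    rw [hAc, hspec, Matrix.map_mul, Matrix.map_mul, hstarmap, hWc, hDc]
    congr 1
    congr 1
    rw [Matrix.diagonal_map (map_zero f)]
    rfl
  -- coloring
  set k : ℕ := ImproperPaper.improperChromaticNumber G d with hkdef
  have hSne : {N | ∃ c : Fin n → Fin N, ImproperPaper.IsImproperColoring G d c}.Nonempty := by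
    refine ⟨n, fun v => v, fun v => ?_⟩
    have : {w | G.Adj v w ∧ w = v} = (∅ : Set (Fin n)) := by
      ext w
      simp only [Set.mem_setOf_eq, Set.mem_empty_iff_false, iff_false, not_and]
      rintro hadj rfl
      exact G.irrefl hadj
    rw [this]
    simp
  have hkmem : ∃ c : Fin n → Fin k, ImproperPaper.IsImproperColoring G d c :=
    Nat.sInf_mem hSne
  obtain ⟨c, hc⟩ := hkmem
  have hk1 : 1 ≤ k := by
    by_contra h
    push_neg at h
    interval_cases k
    exact (c ⟨0, hn⟩).elim0
  have hk0 : 0 < k := hk1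
  -- roots of unity and diagonal unitaries
  set ω : ℂ := Complex.exp (2 * Real.pi * Complex.I / k) with hω
  have hprim : IsPrimitiveRoot ω k := Complex.isPrimitiveRoot_exp k hk0.ne'
  have hω0 : ω ≠ 0 := hprim.ne_zero hk0.ne'
  have hconj : (starRingEnd ℂ) ω = ω⁻¹ := by
    rw [hω, ← Complex.exp_conj, ← Complex.exp_neg]
    congr 1
    simp [map_div₀, Complex.conj_I, map_ofNat]
    ring
  set u : Fin k → Fin n → ℂ := fun j v => ω ^ ((j:ℕ) * (c v : ℕ)) with hu
  have huu : ∀ j v, star (u j v) * u j v = 1 := by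
    intro j v
    simp only [hu]
    rw [RCLike.star_def, map_pow, hconj, inv_pow, inv_mul_cancel₀ (pow_ne_zero _ hω0)]
  set U : Fin k → Matrix (Fin n) (Fin n) ℂ := fun j => Matrix.diagonal (u j) with hU
  have hUl : ∀ j, (U j)ᴴ * U j = 1 := by
    intro j
    simp only [hU]
    rw [Matrix.diagonal_conjTranspose, Matrix.diagonal_mul_diagonal]
    have hfun : (fun i => star (u j) i * u j i) = fun _ => (1:ℂ) := funext fun v => huu j v
    rw [hfun, Matrix.diagonal_one]
  have hUr : ∀ j, U j * (U j)ᴴ = 1 := by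
    intro j
    simp only [hU]
    rw [Matrix.diagonal_conjTranspose, Matrix.diagonal_mul_diagonal]
    have hfun : (fun i => u j i * star (u j) i) = fun _ => (1:ℂ) := by
      funext v
      rw [mul_comm]
      exact huu j v
    rw [hfun, Matrix.diagonal_one]
  have hU0 : U ⟨0, hk0⟩ = 1 := by
    simp only [hU]
    have hfun : u ⟨0, hk0⟩ = fun _ => (1:ℂ) := by
      funext v
      simp [hu]
    rw [hfun, Matrix.diagonal_one]
  -- the matrix b and its complex version Bc
  set b : Matrix (Fin n) (Fin n) ℝ := fun v w => if G.Adj v w ∧ c v = c w then 1 else 0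
    with hb
  set Bc : Matrix (Fin n) (Fin n) ℂ := b.map (fun r => (r:ℂ)) with hBc
  -- decomposition
  have hdecomp : ∑ j : Fin k, (U j * Ac * (U j)ᴴ) = (k:ℂ) • Bc := by
    ext v w
    rw [Matrix.sum_apply, Matrix.smul_apply]
    have hterm : ∀ j : Fin k, (U j * Ac * (U j)ᴴ) v w
        = Ac v w * (u j v * (starRingEnd ℂ) (u j w)) := by
      intro j
      simp only [hU]
      rw [Matrix.diagonal_conjTranspose, Matrix.mul_diagonal, Matrix.diagonal_mul]
      simp only [Pi.star_apply, RCLike.star_def]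
      ring
    rw [Finset.sum_congr rfl fun j _ => hterm j, ← Finset.mul_sum]
    have hsum : ∑ j : Fin k, u j v * (starRingEnd ℂ) (u j w)
        = if c v = c w then (k:ℂ) else 0 := by
      simp only [hu]
      exact root_sum hk0 (c v) (c w)
    rw [hsum]
    rw [hBc, Matrix.map_apply, hb, hAc, Matrix.map_apply, hAdef]
    simp only [SimpleGraph.adjMatrix_apply]
    by_cases h1 : G.Adj v w <;> by_cases h2 : c v = c w <;>
      simp [h1, h2, hf, smul_eq_mul, mul_comm]
  -- eigenvector columns
  set ι : Fin m → Fin n := fun i => σ (Fin.castLE hmn i) with hι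
  have hιinj : Function.Injective ι := by
    intro i i' h
    have h2 := σ.injective h
    exact Fin.ext (by simpa using congrArg Fin.val h2)
  set x : Fin m → Fin n → ℂ := fun i v => Wc v (ι i) with hx
  have hdot : ∀ i i', star (x i) ⬝ᵥ x i' = (Wcᴴ * Wc) (ι i) (ι i') := by
    intro i i'
    rw [Matrix.mul_apply]
    simp only [dotProduct, Matrix.conjTranspose_apply, hx, Pi.star_apply]
  have hxortho : ∀ i i', star (x i) ⬝ᵥ x i' = if i = i' then 1 else 0 := by
    intro i i'
    rw [hdot, hWc1, Matrix.one_apply]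
    by_cases h : i = i'
    · simp [h]
    · rw [if_neg (fun hh => h (hιinj hh)), if_neg h]
  have hxsingle : ∀ i, x i = Wc *ᵥ Pi.single (ι i) 1 := by
    intro i
    funext v
    rw [Matrix.mulVec_single]
    simp [hx]
  have hAx : ∀ i, Ac *ᵥ x i = (μ (ι i) : ℂ) • x i := by
    intro i
    rw [hxsingle i, Matrix.mulVec_mulVec, hAcspec]
    have hWW : Wc * Dc * Wcᴴ * Wc = Wc * Dc := by
      rw [Matrix.mul_assoc (Wc * Dc), hWc1, Matrix.mul_one]
    rw [hWW, ← Matrix.mulVec_mulVec, hDc, Matrix.diagonal_mulVec_single, mul_one]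
    have hsingle : (Pi.single (ι i) ((μ (ι i) : ℂ)) : Fin n → ℂ)
        = (μ (ι i) : ℂ) • (Pi.single (ι i) (1:ℂ) : Fin n → ℂ) := by
      funext v
      by_cases hv : v = ι i <;> simp [Pi.single_apply, hv]
    rw [hsingle, Matrix.mulVec_smul]
  -- reindexing of top eigenvalue sum
  have hreidx : Stop = ∑ i : Fin m, μ (ι i) := by
    rw [hStop]
    have h1 : ∑ i ∈ Finset.univ.filter (fun i : Fin n => (i : ℕ) < m), lam i
        = ∑ i : Fin m, lam (Fin.castLE hmn i) := by
      refine Finset.sum_bij' (fun a ha => (⟨(a:ℕ), (Finset.mem_filter.mp ha).2⟩ : Fin m))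
        (fun a _ => Fin.castLE hmn a) ?_ ?_ ?_ ?_ ?_
      · intro a ha
        exact Finset.mem_univ _
      · intro a ha
        simp only [Finset.mem_filter, Finset.mem_univ, true_and]
        exact a.isLt
      · intro a ha
        exact Fin.ext rfl
      · intro a ha
        exact Fin.ext rfl
      · intro a ha
        rfl
    rw [h1]
    refine Finset.sum_congr rfl fun i _ => ?_
    rw [hσ, hι]
    rfl
  have htop : ∑ i : Fin m, star (x i) ⬝ᵥ (Ac *ᵥ x i) = ((Stop : ℝ) : ℂ) := by
    have h1 : ∀ i : Fin m, star (x i) ⬝ᵥ (Ac *ᵥ x i) = ((μ (ι i) : ℝ) : ℂ) := by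
      intro i
      rw [hAx i, dotProduct_smul, hxortho i i, if_pos rfl, smul_eq_mul, mul_one]
    rw [Finset.sum_congr rfl fun i _ => h1 i, ← Complex.ofReal_sum, hreidx]
  -- quadratic form functional
  set Φ : Matrix (Fin n) (Fin n) ℂ → ℂ := fun M => ∑ i : Fin m, star (x i) ⬝ᵥ (M *ᵥ x i)
    with hΦ
  have hΦadd : ∀ M N, Φ (M + N) = Φ M + Φ N := by
    intro M N
    simp only [hΦ, Matrix.add_mulVec, dotProduct_add]
    rw [Finset.sum_add_distrib]
  have hΦsum : ∀ (s : Finset (Fin k)) (Ms : Fin k → Matrix (Fin n) (Fin n) ℂ),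
      Φ (∑ j ∈ s, Ms j) = ∑ j ∈ s, Φ (Ms j) := by
    intro s Ms
    simp only [hΦ, StmtAux.sum_mulVec]
    rw [Finset.sum_comm]
    exact Finset.sum_congr rfl fun i _ => dotProduct_finsum _ _ _
  -- the master identity
  have hmaster : Φ Ac + ∑ j ∈ Finset.univ.erase (⟨0, hk0⟩ : Fin k), Φ (U j * Ac * (U j)ᴴ)
      = (k:ℂ) * Φ Bc := by
    have hsplit : Ac + ∑ j ∈ Finset.univ.erase (⟨0, hk0⟩ : Fin k), (U j * Ac * (U j)ᴴ)
        = (k:ℂ) • Bc := by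
      rw [← hdecomp, ← Finset.add_sum_erase _ _ (Finset.mem_univ (⟨0, hk0⟩ : Fin k))]
      congr 1
      rw [hU0, Matrix.conjTranspose_one, Matrix.one_mul, Matrix.mul_one]
    have := congrArg Φ hsplit
    rw [hΦadd, hΦsum] at this
    rw [this]
    simp only [hΦ, Matrix.smul_mulVec, dotProduct_smul, smul_eq_mul, Finset.mul_sum]
  -- norm of x i
  have hxnorm : ∀ i, ∑ v, Complex.normSq (x i v) = 1 := by
    intro i
    have h := hxortho i i
    rw [if_pos rfl, dot_self_normSq] at h
    exact_mod_cast h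
  -- bound on Φ Bc
  have hbsym : ∀ v w, b w v = b v w := by
    intro v w
    simp only [hb]
    have hiff : (G.Adj w v ∧ c w = c v) ↔ (G.Adj v w ∧ c v = c w) := by
      rw [G.adj_comm]
      exact and_congr_right fun _ => eq_comm
    exact if_congr hiff rfl rfl
  have hbnn : ∀ v w, 0 ≤ b v w := by
    intro v w
    simp only [hb]
    split <;> norm_num
  have hbrow : ∀ v, ∑ w, b v w ≤ (d:ℝ) := by
    intro v
    have hcv := hc v
    have hseteq : {w | G.Adj v w ∧ c w = c v}
        = ((Finset.univ.filter fun w => G.Adj v w ∧ c v = c w : Finset (Fin n)) : Set (Fin n)) := by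
      ext w
      simp only [Set.mem_setOf_eq, Finset.coe_filter, Finset.mem_univ, true_and,
        Set.mem_setOf_eq]
      exact and_congr_right fun _ => eq_comm
    rw [hseteq, Set.ncard_coe_finset] at hcv
    have hsum : ∑ w, b v w
        = ((Finset.univ.filter fun w => G.Adj v w ∧ c v = c w).card : ℝ) := by
      simp only [hb]
      rw [Finset.sum_boole]
    rw [hsum]
    exact_mod_cast hcv
  have hBbound : (Φ Bc).re ≤ (m:ℝ) * d := by
    simp only [hΦ]
    rw [Complex.re_sum]
    have hle : ∀ i : Fin m, (star (x i) ⬝ᵥ (Bc *ᵥ x i)).re ≤ (d:ℝ) := by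
      intro i
      rw [hBc]
      exact quad_B_le b (d:ℝ) hbsym hbnn hbrow (x i) (hxnorm i) (by positivity)
    calc ∑ i : Fin m, (star (x i) ⬝ᵥ (Bc *ᵥ x i)).re ≤ ∑ _i : Fin m, (d:ℝ) :=
          Finset.sum_le_sum fun i _ => hle i
      _ = (m:ℝ) * d := by simp [mul_comm]
  -- lower bound on conjugated quadratic forms
  have hnm_lt : n - m < n := by omega
  set t0 : ℝ := lam ⟨n - m, hnm_lt⟩ with ht0
  set T : Finset (Fin n) :=
    (Finset.univ.filter (fun i : Fin n => n - m ≤ (i:ℕ))).image σ with hT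
  have hTcard : T.card = m := by
    rw [hT, Finset.card_image_of_injective _ σ.injective, card_filter_ge (by omega)]
    omega
  have hTsum : ∑ j ∈ T, μ j = Sbot := by
    rw [hT, Finset.sum_image (fun a _ a' _ h => σ.injective h), hSbot]
    refine Finset.sum_congr rfl fun i _ => ?_
    rw [hσ]
    rfl
  have hlow : ∀ j : Fin k, Sbot ≤ (Φ (U j * Ac * (U j)ᴴ)).re := by
    intro j
    have hW'1 : (U j * Wc)ᴴ * (U j * Wc) = 1 := by
      rw [Matrix.conjTranspose_mul, Matrix.mul_assoc, ← Matrix.mul_assoc ((U j)ᴴ), hUl j,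
        Matrix.one_mul, hWc1]
    have hW'2 : (U j * Wc) * (U j * Wc)ᴴ = 1 := by
      rw [Matrix.conjTranspose_mul, Matrix.mul_assoc, ← Matrix.mul_assoc Wc, hWc2,
        Matrix.one_mul, hUr j]
    have hM : U j * Ac * (U j)ᴴ = (U j * Wc) * Dc * (U j * Wc)ᴴ := by
      rw [hAcspec, Matrix.conjTranspose_mul]
      simp only [Matrix.mul_assoc]
    obtain ⟨w, hw0, hw1, hwsum, heq⟩ :=
      quad_eq_weights (U j * Wc) (U j * Ac * (U j)ᴴ) μ hW'1 hW'2 hM x hxortho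
    have hre : (Φ (U j * Ac * (U j)ᴴ)).re = ∑ j', μ j' * w j' := by
      simp only [hΦ]
      rw [heq, Complex.ofReal_re]
    rw [hre, ← hTsum]
    refine sum_thresh_le T μ w t0 ?_ ?_ hw0 hw1 ?_
    · intro j' hj'
      rw [hT, Finset.mem_image] at hj'
      obtain ⟨i, hi, rfl⟩ := hj'
      rw [Finset.mem_filter] at hi
      have hle : (⟨n - m, hnm_lt⟩ : Fin n) ≤ i := by
        rw [Fin.le_def]
        exact hi.2
      have h2 := hanti hle
      have heq2 : μ (σ i) = lam i := by rw [hσ]; rfl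
      rw [heq2]
      exact h2
    · intro j' hj'
      have hi : ((σ.symm j' : Fin n) : ℕ) < n - m := by
        by_contra hcon
        push_neg at hcon
        refine hj' ?_
        rw [hT]
        exact Finset.mem_image.mpr ⟨σ.symm j',
          Finset.mem_filter.mpr ⟨Finset.mem_univ _, hcon⟩, σ.apply_symm_apply j'⟩
      have hle : (σ.symm j') ≤ (⟨n - m, hnm_lt⟩ : Fin n) := by
        rw [Fin.le_def]
        exact le_of_lt hi
      have h2 := hanti hle
      have heq2 : μ j' = lam (σ.symm j') := by
        rw [hσ]
        simp
      rw [heq2]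
      exact h2
    · rw [hTcard]
      exact hwsum
  -- trace is zero
  have htrace : ∑ j, μ j = 0 := by
    have h1 : Matrix.trace Ac = 0 := by
      rw [hAc, hAdef]
      simp [Matrix.trace, Matrix.diag, Matrix.map_apply]
    have h2 : Matrix.trace Ac = ((∑ j, μ j : ℝ) : ℂ) := by
      rw [hAcspec, Matrix.trace_mul_cycle, hWc1, Matrix.one_mul, hDc]
      simp [Matrix.trace, Matrix.diag, Matrix.diagonal_apply_eq]
    rw [h1] at h2
    exact_mod_cast h2.symm
  have hlamsum : ∑ j, lam j = 0 := by
    rw [hσ]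
    rw [show ∑ j, (μ ∘ σ) j = ∑ j, μ (σ j) from rfl, Equiv.sum_comp σ μ]
    exact htrace
  -- Sbot ≤ 0
  have hSbot0 : Sbot ≤ 0 := by
    by_cases ht : t0 ≤ 0
    · rw [hSbot]
      refine Finset.sum_nonpos fun i hi => ?_
      rw [Finset.mem_filter] at hi
      have hle : (⟨n - m, hnm_lt⟩ : Fin n) ≤ i := by
        rw [Fin.le_def]
        exact hi.2
      exact le_trans (hanti hle) ht
    · push_neg at ht
      have hrest : 0 ≤ ∑ i ∈ Finset.univ.filter (fun i : Fin n => ¬ (n - m ≤ (i:ℕ))), lam i := by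
        refine Finset.sum_nonneg fun i hi => ?_
        rw [Finset.mem_filter] at hi
        have hle : i ≤ (⟨n - m, hnm_lt⟩ : Fin n) := by
          rw [Fin.le_def]
          have h3 := hi.2
          show (i:ℕ) ≤ n - m
          omega
        exact le_trans (le_of_lt ht) (hanti hle)
      have hsplit := Finset.sum_filter_add_sum_filter_not Finset.univ
        (fun i : Fin n => n - m ≤ (i:ℕ)) lam
      rw [hlamsum] at hsplit
      rw [hSbot]
      linarith
  -- key inequality
  have hkey : Stop ≤ (k:ℝ) * ((m:ℝ) * d) - ((k:ℝ) - 1) * Sbot := by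
    have hre := congrArg Complex.re hmaster
    rw [Complex.add_re] at hre
    have e1 : (Φ Ac).re = Stop := by
      simp only [hΦ]
      rw [htop, Complex.ofReal_re]
    have e2 : ((∑ j ∈ Finset.univ.erase (⟨0, hk0⟩ : Fin k), Φ (U j * Ac * (U j)ᴴ)).re)
        = ∑ j ∈ Finset.univ.erase (⟨0, hk0⟩ : Fin k), (Φ (U j * Ac * (U j)ᴴ)).re :=
      Complex.re_sum _ _
    have hkre : ((k:ℂ) * Φ Bc).re = (k:ℝ) * (Φ Bc).re := by
      rw [show ((k:ℕ):ℂ) = (((k:ℕ):ℝ):ℂ) by push_cast; ring, Complex.re_ofReal_mul]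
    rw [e1, e2, hkre] at hre
    have hcard : (Finset.univ.erase (⟨0, hk0⟩ : Fin k)).card = k - 1 := by
      rw [Finset.card_erase_of_mem (Finset.mem_univ _), Finset.card_univ, Fintype.card_fin]
    have hsumlow : ((k:ℝ) - 1) * Sbot
        ≤ ∑ j ∈ Finset.univ.erase (⟨0, hk0⟩ : Fin k), (Φ (U j * Ac * (U j)ᴴ)).re := by
      have := Finset.card_nsmul_le_sum (Finset.univ.erase (⟨0, hk0⟩ : Fin k))
        (fun j => (Φ (U j * Ac * (U j)ᴴ)).re) Sbot (fun j _ => hlow j)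
      rw [hcard, nsmul_eq_mul, Nat.cast_sub hk1, Nat.cast_one] at this
      exact this
    have hBk : (k:ℝ) * (Φ Bc).re ≤ (k:ℝ) * ((m:ℝ) * d) :=
      mul_le_mul_of_nonneg_left hBbound (by positivity)
    linarith
  -- final arithmetic
  have hdm1 : (1:ℝ) ≤ (d:ℝ) * m := by
    have h1 : (1:ℝ) ≤ (d:ℝ) := by exact_mod_cast hd
    have h2 : (1:ℝ) ≤ (m:ℝ) := by exact_mod_cast hm
    exact (one_mul (1:ℝ)).symm.le.trans (mul_le_mul h1 h2 zero_le_one (by linarith))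
  have hD : 0 < (d:ℝ) * m - Sbot := by linarith
  have hfrac : (-(( d:ℝ) * m) + Stop) / ((d:ℝ) * m - Sbot) ≤ (k:ℝ) - 1 := by
    rw [div_le_iff₀ hD]
    have hexpand : ((k:ℝ) - 1) * ((d:ℝ) * m - Sbot)
        = (k:ℝ) * ((m:ℝ) * d) - ((k:ℝ) - 1) * Sbot - (d:ℝ) * m := by ring
    rw [hexpand]
    linarith [hkey]
  have hk1' : (1:ℝ) ≤ (k:ℝ) := by exact_mod_cast hk1
  linarith [hfrac]
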